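/- arXiv:1207.0578 — 2 statements merged into one kernel-verified Lean document; each statement's English description precedes it below -/
import Mathlib

section
/- Let x = (x_1,…,x_n) be a permutation of a set V of n planar points, no three collinear, such that the tour C(x) contains two intersecting edges. Then there exist indices 1 ≤ i < j ≤ n such that the edges {x_{i−1},x_i} and {x_j,x_{j+1}} of C(x) intersect, the inversion y = inv_{i,j}[x] satisfies C(x) \ C(y) = {{x_{i−1},x_i},{x_j,x_{j+1}}} and C(y) \ C(x) = {{x_{i−1},x_j},{x_i,x_{j+1}}}, and the two newly introduced edges {x_{i−1},x_j} and {x_i,x_{j+1}} do not intersect each other. -/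
noncomputable section
open Real EuclideanGeometry MeasureTheory
open scoped Classical ENNReal

/-- The Euclidean plane. -/
abbrev Plane := EuclideanSpace ℝ (Fin 2)

/-- Cyclic successor of an index (0-indexed version of `i + 1` modulo `n`). -/
def nxt {n : ℕ} (i : Fin n) : Fin n :=
  ⟨(i.1 + 1) % n, Nat.mod_lt _ (Nat.lt_of_le_of_lt (Nat.zero_le _) i.2)⟩

/-- Cyclic predecessor of an index (0-indexed version of `i - 1` modulo `n`). -/
def prv {n : ℕ} (i : Fin n) : Fin n :=
  ⟨(i.1 + (n - 1)) % n, Nat.mod_lt _ (Nat.lt_of_le_of_lt (Nat.zero_le _) i.2)⟩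

/-- Two closed segments `[a,b]` and `[c,d]` intersect: they have a common point
interior to both segments. -/
def segsCross (a b c d : Plane) : Prop :=
  ∃ p : Plane, p ∈ openSegment ℝ a b ∧ p ∈ openSegment ℝ c d

/-- No three (distinct) points of `V` are collinear. -/
def noThreeCollinear (V : Set Plane) : Prop :=
  ∀ u ∈ V, ∀ v ∈ V, ∀ w ∈ V, u ≠ v → u ≠ w → v ≠ w →
    ¬ Collinear ℝ ({u, v, w} : Set Plane)

/-- The set of (undirected) edges of the Hamiltonian cycle `C(x)` induced by the
permutation `x`. -/
def tourEdges {n : ℕ} (x : Fin n → Plane) : Set (Sym2 Plane) :=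
  {e | ∃ i : Fin n, e = s(x i, x (nxt i))}

/-- The tour `C(x)` is intersection-free: no two of its edges intersect. -/
def intersectionFree {n : ℕ} (x : Fin n → Plane) : Prop :=
  ∀ i j : Fin n, s(x i, x (nxt i)) ≠ s(x j, x (nxt j)) →
    ¬ segsCross (x i) (x (nxt i)) (x j) (x (nxt j))

/-- The inversion (2-opt) operation: reverse the subsequence between positions
`min i j` and `max i j`. -/
def invop {α : Type*} {n : ℕ} (i j : Fin n) (x : Fin n → α) : Fin n → α :=
  fun p =>
    if h : (min i j).1 ≤ p.1 ∧ p.1 ≤ (max i j).1 then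
      x ⟨(min i j).1 + (max i j).1 - p.1, by
        obtain ⟨h1, h2⟩ := h
        have := (max i j).2
        omega⟩
    else x p

/-- The jump operation: move the element in position `i` into position `j`,
shifting the intermediate elements accordingly. -/
def jmp {α : Type*} {n : ℕ} (i j : Fin n) (x : Fin n → α) : Fin n → α :=
  fun p =>
    if i ≤ j then
      if p < i then x p
      else if h : p.1 < j.1 then x ⟨p.1 + 1, by have := j.2; omega⟩
      else if p = j then x i
      else x p
    else
      if p < j then x p
      else if p = j then x i
      else if h : p.1 ≤ i.1 then x ⟨p.1 - 1, by have := p.2; omega⟩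
      else x p

/-- The fitness of a permutation: the total Euclidean length of the tour `C(x)`. -/
def fitness {n : ℕ} (x : Fin n → Plane) : ℝ :=
  ∑ i : Fin n, dist (x i) (x (nxt i))

/-- `x` is a permutation (an enumeration without repetitions) of the point set `V`. -/
def isPermOf {n : ℕ} (x : Fin n → Plane) (V : Set Plane) : Prop :=
  Function.Injective x ∧ Set.range x = V

/-- `x` is an optimal permutation of `V`: it minimizes the fitness among all
permutations of `V`. -/
def IsOptimalPerm {n : ℕ} (V : Set Plane) (x : Fin n → Plane) : Prop :=
  isPermOf x V ∧ ∀ y : Fin n → Plane, isPermOf y V → fitness x ≤ fitness y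

/-- `hull(V)`: the set of points of `V` that are vertices of the convex hull of `V`. -/
def hullVertices (V : Set Plane) : Set Plane :=
  {v | v ∈ V ∧ v ∉ convexHull ℝ (V \ {v})}

/-- `V` is angle-bounded by `ε`: every angle formed by three distinct points of `V`
lies strictly between `ε` and `π - ε`. -/
def angleBounded (ε : ℝ) (V : Set Plane) : Prop :=
  ∀ u ∈ V, ∀ v ∈ V, ∀ w ∈ V, u ≠ v → u ≠ w → v ≠ w →
    ε < ∠ u v w ∧ ∠ u v w < Real.pi - ε

/-- The set of pairwise distances between distinct points of `V`. -/
def pairDists (V : Set Plane) : Set ℝ :=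
  {d | ∃ u ∈ V, ∃ v ∈ V, u ≠ v ∧ d = dist u v}

/-- `γ(ε) = (d_max/d_min - 1) · cos ε / (1 - cos ε)`. -/
def gammaF (ε dmax dmin : ℝ) : ℝ :=
  (dmax / dmin - 1) * (Real.cos ε / (1 - Real.cos ε))
-- ===== auxiliary lemmas =====

lemma sym2_congr {β : Type*} {a b c d : β} (h : (a, b) = (c, d)) : s(a, b) = s(c, d) := by
  obtain ⟨rfl, rfl⟩ := Prod.mk.inj h
  rfl

lemma collinear_of_cross {P Q R S : Plane} (hPQ : P ≠ Q)
    (h : segsCross P Q R S) (h' : segsCross P R Q S) :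
    Collinear ℝ ({P, Q, R} : Set Plane) := by
  obtain ⟨p, hp1, hp2⟩ := h
  obtain ⟨q, hq1, hq2⟩ := h'
  have w1 : Wbtw ℝ P p Q := mem_segment_iff_wbtw.mp (openSegment_subset_segment ℝ _ _ hp1)
  have w2 : Wbtw ℝ R p S := mem_segment_iff_wbtw.mp (openSegment_subset_segment ℝ _ _ hp2)
  have w3 : Wbtw ℝ P q R := mem_segment_iff_wbtw.mp (openSegment_subset_segment ℝ _ _ hq1)
  have w4 : Wbtw ℝ Q q S := mem_segment_iff_wbtw.mp (openSegment_subset_segment ℝ _ _ hq2)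
  have A := w1.dist_add_dist
  have B := w2.dist_add_dist
  have C := w3.dist_add_dist
  have D := w4.dist_add_dist
  have T1 : dist P R ≤ dist P p + dist p R := dist_triangle _ _ _
  have T2 : dist Q S ≤ dist Q p + dist p S := dist_triangle _ _ _
  have T3 : dist P Q ≤ dist P q + dist q Q := dist_triangle _ _ _
  have T4 : dist R S ≤ dist R q + dist q S := dist_triangle _ _ _
  have hc1 : dist Q p = dist p Q := dist_comm _ _
  have hc2 : dist p R = dist R p := dist_comm _ _
  have hc3 : dist q Q = dist Q q := dist_comm _ _
  have hc4 : dist R q = dist q R := dist_comm _ _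
  have key : dist P p + dist p R = dist P R := by linarith
  have w5 : Wbtw ℝ P p R := dist_add_dist_eq_iff.mp key
  -- p ≠ P
  have hpP : p ≠ P := by
    rintro rfl
    exact hPQ (left_mem_openSegment_iff.mp hp1)
  have c1 : Collinear ℝ ({P, p, Q} : Set Plane) := w1.collinear
  have c2 : Collinear ℝ ({P, p, R} : Set Plane) := w5.collinear
  have hQ : Q ∈ line[ℝ, P, p] :=
    c1.mem_affineSpan_of_mem_of_ne (Set.mem_insert _ _)
      (Set.mem_insert_of_mem _ (Set.mem_insert _ _))
      (Set.mem_insert_of_mem _ (Set.mem_insert_of_mem _ rfl)) (Ne.symm hpP)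
  have hR : R ∈ line[ℝ, P, p] :=
    c2.mem_affineSpan_of_mem_of_ne (Set.mem_insert _ _)
      (Set.mem_insert_of_mem _ (Set.mem_insert _ _))
      (Set.mem_insert_of_mem _ (Set.mem_insert_of_mem _ rfl)) (Ne.symm hpP)
  have : Collinear ℝ ({Q, R, P, p} : Set Plane) :=
    collinear_insert_insert_of_mem_affineSpan_pair hQ hR
  refine this.subset ?_
  intro z hz
  simp only [Set.mem_insert_iff, Set.mem_singleton_iff] at hz ⊢
  tauto

lemma collinear_of_cross_shared {P Q S : Plane} (hPQ : P ≠ Q)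
    (h : segsCross P Q Q S) : Collinear ℝ ({P, Q, S} : Set Plane) := by
  obtain ⟨p, hp1, hp2⟩ := h
  have w1 : Wbtw ℝ P p Q := mem_segment_iff_wbtw.mp (openSegment_subset_segment ℝ _ _ hp1)
  have w2 : Wbtw ℝ Q p S := mem_segment_iff_wbtw.mp (openSegment_subset_segment ℝ _ _ hp2)
  have hpQ : p ≠ Q := by
    rintro rfl
    exact hPQ (right_mem_openSegment_iff.mp hp1)
  have c1 : Collinear ℝ ({Q, p, P} : Set Plane) := by
    refine w1.collinear.subset ?_
    intro z hz
    simp only [Set.mem_insert_iff, Set.mem_singleton_iff] at hz ⊢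
    tauto
  have c2 : Collinear ℝ ({Q, p, S} : Set Plane) := w2.collinear
  have hP : P ∈ line[ℝ, Q, p] :=
    c1.mem_affineSpan_of_mem_of_ne (Set.mem_insert _ _)
      (Set.mem_insert_of_mem _ (Set.mem_insert _ _))
      (Set.mem_insert_of_mem _ (Set.mem_insert_of_mem _ rfl)) (Ne.symm hpQ)
  have hS : S ∈ line[ℝ, Q, p] :=
    c2.mem_affineSpan_of_mem_of_ne (Set.mem_insert _ _)
      (Set.mem_insert_of_mem _ (Set.mem_insert _ _))
      (Set.mem_insert_of_mem _ (Set.mem_insert_of_mem _ rfl)) (Ne.symm hpQ)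
  have : Collinear ℝ ({P, S, Q, p} : Set Plane) :=
    collinear_insert_insert_of_mem_affineSpan_pair hP hS
  refine this.subset ?_
  intro z hz
  simp only [Set.mem_insert_iff, Set.mem_singleton_iff] at hz ⊢
  tauto


lemma nxt_val_of_lt {n : ℕ} {p : Fin n} (h : p.1 + 1 < n) : (nxt p).1 = p.1 + 1 := by
  simp [nxt, Nat.mod_eq_of_lt h]

lemma nxt_val_of_eq {n : ℕ} {p : Fin n} (h : p.1 + 1 = n) : (nxt p).1 = 0 := by
  simp [nxt, h]

lemma prv_val {n : ℕ} {p : Fin n} (h : 1 ≤ p.1) : (prv p).1 = p.1 - 1 := by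
  have h2 := p.2
  show (p.1 + (n - 1)) % n = p.1 - 1
  have e : p.1 + (n - 1) = (p.1 - 1) + n := by omega
  rw [e, Nat.add_mod_right, Nat.mod_eq_of_lt (by omega)]

lemma nxt_prv {n : ℕ} {p : Fin n} (h : 1 ≤ p.1) : nxt (prv p) = p := by
  have h2 := p.2
  apply Fin.ext
  show ((prv p).1 + 1) % n = p.1
  rw [prv_val h]
  have e : p.1 - 1 + 1 = p.1 := by omega
  rw [e, Nat.mod_eq_of_lt h2]

variable {α : Type*}

lemma invop_apply_mem {n : ℕ} {i j : Fin n} (hij : i.1 ≤ j.1) (x : Fin n → α) {p : Fin n}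
    (h1 : i.1 ≤ p.1) (h2 : p.1 ≤ j.1) :
    invop i j x p = x ⟨i.1 + j.1 - p.1, by have := j.2; omega⟩ := by
  have hm : min i j = i := min_eq_left (by exact_mod_cast Fin.mk_le_mk.mpr hij)
  have hM : max i j = j := max_eq_right (by exact_mod_cast Fin.mk_le_mk.mpr hij)
  simp only [invop, hm, hM]
  rw [dif_pos ⟨h1, h2⟩]

lemma invop_apply_not_mem {n : ℕ} {i j : Fin n} (hij : i.1 ≤ j.1) (x : Fin n → α) {p : Fin n}
    (h : ¬ (i.1 ≤ p.1 ∧ p.1 ≤ j.1)) : invop i j x p = x p := by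
  have hm : min i j = i := min_eq_left (by exact_mod_cast Fin.mk_le_mk.mpr hij)
  have hM : max i j = j := max_eq_right (by exact_mod_cast Fin.mk_le_mk.mpr hij)
  simp only [invop, hm, hM]
  rw [dif_neg h]

section edges
variable {n : ℕ} {i j : Fin n} (x : Fin n → α)

/-- edge of the reversed tour at a position before the block or after the block -/
lemma edge_invop_outside (h1 : 1 ≤ i.1) (hij : i.1 ≤ j.1) {p : Fin n}
    (h : p.1 + 1 < i.1 ∨ j.1 < p.1) :
    (invop i j x p, invop i j x (nxt p)) = (x p, x (nxt p)) := by
  have hn := p.2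
  have hjn := j.2
  have e1 : invop i j x p = x p := invop_apply_not_mem hij x (by omega)
  have e2 : invop i j x (nxt p) = x (nxt p) := by
    rcases Nat.lt_or_ge (p.1 + 1) n with hlt | hge
    · have hv : (nxt p).1 = p.1 + 1 := nxt_val_of_lt hlt
      exact invop_apply_not_mem hij x (by omega)
    · have hv : (nxt p).1 = 0 := nxt_val_of_eq (by omega)
      exact invop_apply_not_mem hij x (by omega)
  rw [e1, e2]

lemma edge_invop_prv (h1 : 1 ≤ i.1) (hij : i.1 < j.1) :
    (invop i j x (prv i), invop i j x (nxt (prv i))) = (x (prv i), x j) := by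
  have hjn := j.2
  have hv : (prv i).1 = i.1 - 1 := prv_val h1
  have e1 : invop i j x (prv i) = x (prv i) := invop_apply_not_mem hij.le x (by omega)
  rw [nxt_prv h1]
  have e2 : invop i j x i = x ⟨i.1 + j.1 - i.1, by omega⟩ :=
    invop_apply_mem hij.le x le_rfl hij.le
  have e3 : (⟨i.1 + j.1 - i.1, by omega⟩ : Fin n) = j := by
    apply Fin.ext; show i.1 + j.1 - i.1 = j.1; omega
  rw [e1, e2, e3]

lemma edge_invop_j (h1 : 1 ≤ i.1) (hij : i.1 < j.1) :
    (invop i j x j, invop i j x (nxt j)) = (x i, x (nxt j)) := by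
  have hjn := j.2
  have e1 : invop i j x j = x ⟨i.1 + j.1 - j.1, by omega⟩ :=
    invop_apply_mem hij.le x hij.le le_rfl
  have e1' : (⟨i.1 + j.1 - j.1, by omega⟩ : Fin n) = i := by
    apply Fin.ext; show i.1 + j.1 - j.1 = i.1; omega
  have e2 : invop i j x (nxt j) = x (nxt j) := by
    rcases Nat.lt_or_ge (j.1 + 1) n with hlt | hge
    · have hv : (nxt j).1 = j.1 + 1 := nxt_val_of_lt hlt
      exact invop_apply_not_mem hij.le x (by omega)
    · have hv : (nxt j).1 = 0 := nxt_val_of_eq (by omega)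
      exact invop_apply_not_mem hij.le x (by omega)
  rw [e1, e1', e2]

lemma edge_invop_inside (hij : i.1 < j.1) {p : Fin n}
    (hp1 : i.1 ≤ p.1) (hp2 : p.1 < j.1) :
    (invop i j x p, invop i j x (nxt p))
      = (x (nxt ⟨i.1 + j.1 - 1 - p.1, by have := j.2; omega⟩),
         x ⟨i.1 + j.1 - 1 - p.1, by have := j.2; omega⟩) := by
  have hjn := j.2
  have e1 : invop i j x p = x ⟨i.1 + j.1 - p.1, by omega⟩ :=
    invop_apply_mem hij.le x hp1 (by omega)
  have hv : (nxt p).1 = p.1 + 1 := nxt_val_of_lt (by omega)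
  have e2 : invop i j x (nxt p) = x ⟨i.1 + j.1 - (nxt p).1, by omega⟩ :=
    invop_apply_mem hij.le x (by omega) (by omega)
  have e3 : (⟨i.1 + j.1 - (nxt p).1, by omega⟩ : Fin n)
      = (⟨i.1 + j.1 - 1 - p.1, by omega⟩ : Fin n) := by
    apply Fin.ext; show i.1 + j.1 - (nxt p).1 = i.1 + j.1 - 1 - p.1; omega
  have e4 : (⟨i.1 + j.1 - p.1, by omega⟩ : Fin n)
      = nxt (⟨i.1 + j.1 - 1 - p.1, by omega⟩ : Fin n) := by
    apply Fin.ext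
    show i.1 + j.1 - p.1 = (i.1 + j.1 - 1 - p.1 + 1) % n
    rw [Nat.mod_eq_of_lt (by omega)]
    omega
  rw [e1, e2, e3, e4]
end edges

lemma invop_edges_iff {n : ℕ} (x : Fin n → α) {i j : Fin n}
    (h1 : 1 ≤ i.1) (hij : i.1 < j.1) (e : Sym2 α) :
    (∃ p : Fin n, e = s(invop i j x p, invop i j x (nxt p))) ↔
      ((∃ q : Fin n, q ≠ prv i ∧ q ≠ j ∧ e = s(x q, x (nxt q))) ∨
       e = s(x (prv i), x j) ∨ e = s(x i, x (nxt j))) := by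
  have hjn := j.2
  have hpv : (prv i).1 = i.1 - 1 := prv_val h1
  constructor
  · rintro ⟨p, rfl⟩
    have hpn := p.2
    rcases (show p.1 + 1 < i.1 ∨ p.1 + 1 = i.1 ∨ (i.1 ≤ p.1 ∧ p.1 < j.1) ∨ p.1 = j.1 ∨ j.1 < p.1
      by omega) with h | h | ⟨ha, hb⟩ | h | h
    · exact Or.inl ⟨p, fun he => by rw [he, hpv] at h; omega,
        fun he => by rw [he] at h; omega,
        sym2_congr (edge_invop_outside x h1 hij.le (Or.inl h))⟩
    · have hp : p = prv i := Fin.ext (by rw [hpv]; omega)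
      rw [hp]
      exact Or.inr (Or.inl (sym2_congr (edge_invop_prv x h1 hij)))
    · refine Or.inl ⟨⟨i.1 + j.1 - 1 - p.1, by omega⟩, ?_, ?_, ?_⟩
      · intro he
        have := congrArg Fin.val he
        rw [hpv] at this
        simp only [] at this
        omega
      · intro he
        have := congrArg Fin.val he
        simp only [] at this
        omega
      · rw [sym2_congr (edge_invop_inside x hij ha hb)]
        exact Sym2.eq_swap
    · have hp : p = j := Fin.ext h
      rw [hp]
      exact Or.inr (Or.inr (sym2_congr (edge_invop_j x h1 hij)))
    · exact Or.inl ⟨p, fun he => by rw [he, hpv] at h; omega,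
        fun he => by rw [he] at h; omega,
        sym2_congr (edge_invop_outside x h1 hij.le (Or.inr h))⟩
  · rintro (⟨q, hq1, hq2, rfl⟩ | rfl | rfl)
    · have hqn := q.2
      have hv1 : q.1 ≠ i.1 - 1 := fun he => hq1 (Fin.ext (by rw [hpv]; omega))
      have hv2 : q.1 ≠ j.1 := fun he => hq2 (Fin.ext he)
      rcases (show q.1 + 1 < i.1 ∨ (i.1 ≤ q.1 ∧ q.1 < j.1) ∨ j.1 < q.1 by omega)
        with h | ⟨ha, hb⟩ | h
      · exact ⟨q, (sym2_congr (edge_invop_outside x h1 hij.le (Or.inl h))).symm⟩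
      · refine ⟨⟨i.1 + j.1 - 1 - q.1, by omega⟩, ?_⟩
        have hcmp := edge_invop_inside x hij
          (p := ⟨i.1 + j.1 - 1 - q.1, by omega⟩) (by simp only []; omega) (by simp only []; omega)
        rw [sym2_congr hcmp]
        have hqq : (⟨i.1 + j.1 - 1 - (⟨i.1 + j.1 - 1 - q.1, by omega⟩ : Fin n).1,
            by simp only []; omega⟩ : Fin n) = q := by
          apply Fin.ext
          show i.1 + j.1 - 1 - (i.1 + j.1 - 1 - q.1) = q.1
          omega
        rw [hqq]
        exact Sym2.eq_swap
      · exact ⟨q, (sym2_congr (edge_invop_outside x h1 hij.le (Or.inr h))).symm⟩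
    · exact ⟨prv i, (sym2_congr (edge_invop_prv x h1 hij)).symm⟩
    · exact ⟨j, (sym2_congr (edge_invop_j x h1 hij)).symm⟩

lemma nxt_cases {n : ℕ} (q : Fin n) :
    ((nxt q).1 = q.1 + 1 ∧ q.1 + 1 < n) ∨ ((nxt q).1 = 0 ∧ q.1 + 1 = n) := by
  have := q.2
  rcases Nat.lt_or_ge (q.1 + 1) n with h | h
  · exact Or.inl ⟨nxt_val_of_lt h, h⟩
  · exact Or.inr ⟨nxt_val_of_eq (by omega), by omega⟩

section uniq
variable {n : ℕ} {x : Fin n → α} {i j : Fin n}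

lemma edge_eq_e1 (hinj : Function.Injective x) (h1 : 1 ≤ i.1) (hij : i.1 < j.1) {q : Fin n}
    (h : s(x q, x (nxt q)) = s(x (prv i), x i)) : q = prv i := by
  have hjn := j.2
  rcases Sym2.eq_iff.mp h with ⟨ha, _⟩ | ⟨ha, hb⟩
  · exact hinj ha
  · exfalso
    have h2 := congrArg Fin.val (hinj ha)
    have h3 := congrArg Fin.val (hinj hb)
    rw [prv_val h1] at h3
    rcases nxt_cases q with ⟨hv, hb'⟩ | ⟨hv, hb'⟩ <;> omega

lemma edge_eq_e2 (hinj : Function.Injective x) (h1 : 1 ≤ i.1) (hij : i.1 < j.1) {q : Fin n}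
    (h : s(x q, x (nxt q)) = s(x j, x (nxt j))) : q = j := by
  have hjn := j.2
  rcases Sym2.eq_iff.mp h with ⟨ha, _⟩ | ⟨ha, hb⟩
  · exact hinj ha
  · exfalso
    have h2 := congrArg Fin.val (hinj ha)
    have h3 := congrArg Fin.val (hinj hb)
    rcases nxt_cases q with ⟨hv, hb'⟩ | ⟨hv, hb'⟩ <;>
      rcases nxt_cases j with ⟨hv', hb''⟩ | ⟨hv', hb''⟩ <;> omega

lemma edge_ne_f1 (hinj : Function.Injective x) (h1 : 1 ≤ i.1) (hij : i.1 < j.1)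
    (hdeg : ¬ (i.1 = 1 ∧ j.1 + 1 = n)) (q : Fin n) :
    s(x q, x (nxt q)) ≠ s(x (prv i), x j) := by
  have hjn := j.2
  intro h
  rcases Sym2.eq_iff.mp h with ⟨ha, hb⟩ | ⟨ha, hb⟩ <;>
    [(have h2 := congrArg Fin.val (hinj ha); rw [prv_val h1] at h2;
      have h3 := congrArg Fin.val (hinj hb));
     (have h2 := congrArg Fin.val (hinj ha);
      have h3 := congrArg Fin.val (hinj hb); rw [prv_val h1] at h3)] <;>
    rcases nxt_cases q with ⟨hv, hb'⟩ | ⟨hv, hb'⟩ <;> simp only [not_and] at hdeg <;> omega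

lemma edge_ne_f2 (hinj : Function.Injective x) (h1 : 1 ≤ i.1) (hij : i.1 < j.1)
    (hdeg : ¬ (i.1 = 1 ∧ j.1 + 1 = n)) (q : Fin n) :
    s(x q, x (nxt q)) ≠ s(x i, x (nxt j)) := by
  have hjn := j.2
  intro h
  rcases Sym2.eq_iff.mp h with ⟨ha, hb⟩ | ⟨ha, hb⟩ <;>
    (have h2 := congrArg Fin.val (hinj ha); have h3 := congrArg Fin.val (hinj hb)) <;>
    rcases nxt_cases q with ⟨hv, hb'⟩ | ⟨hv, hb'⟩ <;>
    rcases nxt_cases j with ⟨hv', hb''⟩ | ⟨hv', hb''⟩ <;> simp only [not_and] at hdeg <;> omega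

lemma e1_ne_f1 (hinj : Function.Injective x) (h1 : 1 ≤ i.1) (hij : i.1 < j.1) :
    s(x (prv i), x i) ≠ s(x (prv i), x j) := by
  have hjn := j.2
  intro h
  rcases Sym2.eq_iff.mp h with ⟨ha, hb⟩ | ⟨ha, hb⟩ <;>
    (have h2 := congrArg Fin.val (hinj ha); have h3 := congrArg Fin.val (hinj hb)) <;>
    rw [prv_val h1] at * <;> omega

lemma e1_ne_f2 (hinj : Function.Injective x) (h1 : 1 ≤ i.1) (hij : i.1 < j.1)
    (hdeg : ¬ (i.1 = 1 ∧ j.1 + 1 = n)) :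
    s(x (prv i), x i) ≠ s(x i, x (nxt j)) := by
  have hjn := j.2
  intro h
  rcases Sym2.eq_iff.mp h with ⟨ha, hb⟩ | ⟨ha, hb⟩ <;>
    (have h2 := congrArg Fin.val (hinj ha); have h3 := congrArg Fin.val (hinj hb)) <;>
    rw [prv_val h1] at * <;>
    rcases nxt_cases j with ⟨hv', hb''⟩ | ⟨hv', hb''⟩ <;> simp only [not_and] at hdeg <;> omega

lemma e2_ne_f1 (hinj : Function.Injective x) (h1 : 1 ≤ i.1) (hij : i.1 < j.1)
    (hdeg : ¬ (i.1 = 1 ∧ j.1 + 1 = n)) :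
    s(x j, x (nxt j)) ≠ s(x (prv i), x j) := by
  have hjn := j.2
  intro h
  rcases Sym2.eq_iff.mp h with ⟨ha, hb⟩ | ⟨ha, hb⟩ <;>
    (have h2 := congrArg Fin.val (hinj ha); have h3 := congrArg Fin.val (hinj hb)) <;>
    rw [prv_val h1] at * <;>
    rcases nxt_cases j with ⟨hv', hb''⟩ | ⟨hv', hb''⟩ <;> simp only [not_and] at hdeg <;> omega

lemma e2_ne_f2 (hinj : Function.Injective x) (h1 : 1 ≤ i.1) (hij : i.1 < j.1) :
    s(x j, x (nxt j)) ≠ s(x i, x (nxt j)) := by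
  have hjn := j.2
  intro h
  rcases Sym2.eq_iff.mp h with ⟨ha, hb⟩ | ⟨ha, hb⟩ <;>
    (have h2 := congrArg Fin.val (hinj ha); have h3 := congrArg Fin.val (hinj hb)) <;>
    rcases nxt_cases j with ⟨hv', hb''⟩ | ⟨hv', hb''⟩ <;> omega

end uniq

lemma mem_tourEdges_iff {n : ℕ} (z : Fin n → Plane) (e : Sym2 Plane) :
    e ∈ tourEdges z ↔ ∃ p : Fin n, e = s(z p, z (nxt p)) := Iff.rfl

section diffs
variable {n : ℕ} {x : Fin n → Plane} {i j : Fin n}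

lemma tourEdges_diff1 (hinj : Function.Injective x) (h1 : 1 ≤ i.1) (hij : i.1 < j.1)
    (hdeg : ¬ (i.1 = 1 ∧ j.1 + 1 = n)) :
    tourEdges x \ tourEdges (invop i j x)
      = {s(x (prv i), x i), s(x j, x (nxt j))} := by
  ext e
  simp only [Set.mem_diff, mem_tourEdges_iff, Set.mem_insert_iff, Set.mem_singleton_iff,
    invop_edges_iff x h1 hij]
  constructor
  · rintro ⟨⟨q, rfl⟩, hnF⟩
    push_neg at hnF
    obtain ⟨hA, _, _⟩ := hnF
    by_cases hq1 : q = prv i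
    · subst hq1
      rw [nxt_prv h1]
      exact Or.inl rfl
    · by_cases hq2 : q = j
      · subst hq2
        exact Or.inr rfl
      · exact absurd rfl (hA q hq1 hq2)
  · rintro (rfl | rfl)
    · refine ⟨⟨prv i, by rw [nxt_prv h1]⟩, ?_⟩
      rintro (⟨q, hq1, _, heq⟩ | heq | heq)
      · exact hq1 (edge_eq_e1 hinj h1 hij heq.symm)
      · exact e1_ne_f1 hinj h1 hij heq
      · exact e1_ne_f2 hinj h1 hij hdeg heq
    · refine ⟨⟨j, rfl⟩, ?_⟩
      rintro (⟨q, _, hq2, heq⟩ | heq | heq)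
      · exact hq2 (edge_eq_e2 hinj h1 hij heq.symm)
      · exact e2_ne_f1 hinj h1 hij hdeg heq
      · exact e2_ne_f2 hinj h1 hij heq

lemma tourEdges_diff2 (hinj : Function.Injective x) (h1 : 1 ≤ i.1) (hij : i.1 < j.1)
    (hdeg : ¬ (i.1 = 1 ∧ j.1 + 1 = n)) :
    tourEdges (invop i j x) \ tourEdges x
      = {s(x (prv i), x j), s(x i, x (nxt j))} := by
  ext e
  simp only [Set.mem_diff, mem_tourEdges_iff, Set.mem_insert_iff, Set.mem_singleton_iff,
    invop_edges_iff x h1 hij]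
  constructor
  · rintro ⟨hF, hnE⟩
    rcases hF with ⟨q, _, _, rfl⟩ | rfl | rfl
    · exact absurd ⟨q, rfl⟩ hnE
    · exact Or.inl rfl
    · exact Or.inr rfl
  · rintro (rfl | rfl)
    · refine ⟨Or.inr (Or.inl rfl), ?_⟩
      rintro ⟨q, heq⟩
      exact edge_ne_f1 hinj h1 hij hdeg q heq.symm
    · refine ⟨Or.inr (Or.inr rfl), ?_⟩
      rintro ⟨q, heq⟩
      exact edge_ne_f2 hinj h1 hij hdeg q heq.symm

end diffs

lemma stmt2_main {n : ℕ} (x : Fin n → Plane) (hinj : Function.Injective x)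
    (hcol : noThreeCollinear (Set.range x)) (a b : Fin n) (hab : a.1 < b.1)
    (hne : s(x a, x (nxt a)) ≠ s(x b, x (nxt b)))
    (hcr : segsCross (x a) (x (nxt a)) (x b) (x (nxt b))) :
    ∃ i j : Fin n, i < j ∧
      segsCross (x (prv i)) (x i) (x j) (x (nxt j)) ∧
      tourEdges x \ tourEdges (invop i j x)
        = {s(x (prv i), x i), s(x j, x (nxt j))} ∧
      tourEdges (invop i j x) \ tourEdges x
        = {s(x (prv i), x j), s(x i, x (nxt j))} ∧
      ¬ segsCross (x (prv i)) (x j) (x i) (x (nxt j)) := by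
  have hbn := b.2
  have hxne : ∀ p q : Fin n, p.1 ≠ q.1 → x p ≠ x q :=
    fun p q h he => h (congrArg Fin.val (hinj he))
  -- n ≥ 3
  have hn3 : 3 ≤ n := by
    by_contra hLt
    push_neg at hLt
    have hn2 : n = 2 := by omega
    have ha0 : a.1 = 0 := by omega
    have hb1 : b.1 = 1 := by omega
    have hnab : nxt a = b := by
      rcases nxt_cases a with ⟨hv, _⟩ | ⟨_, hv2⟩
      · exact Fin.ext (by omega)
      · omega
    have hnba : nxt b = a := by
      rcases nxt_cases b with ⟨_, hv2⟩ | ⟨hv, _⟩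
      · omega
      · exact Fin.ext (by omega)
    apply hne
    rw [hnab, hnba]
    exact Sym2.eq_swap
  -- not adjacent: b ≠ a + 1
  have hb_ne : b.1 ≠ a.1 + 1 := by
    intro hadj
    have hnab : nxt a = b := by
      rcases nxt_cases a with ⟨hv, _⟩ | ⟨_, hv2⟩
      · exact Fin.ext (by omega)
      · omega
    rw [hnab] at hcr
    have hPQ : x a ≠ x b := hxne a b (by omega)
    have hc := collinear_of_cross_shared hPQ hcr
    have hnb : (nxt b).1 = b.1 + 1 ∨ ((nxt b).1 = 0 ∧ b.1 + 1 = n) := by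
      rcases nxt_cases b with ⟨hv, _⟩ | ⟨hv, hv2⟩
      · exact Or.inl hv
      · exact Or.inr ⟨hv, hv2⟩
    exact hcol (x a) ⟨a, rfl⟩ (x b) ⟨b, rfl⟩ (x (nxt b)) ⟨nxt b, rfl⟩
      (hxne a b (by omega)) (hxne a (nxt b) (by omega)) (hxne b (nxt b) (by omega)) hc
  -- not wrapped-adjacent: ¬(a = 0 ∧ b = n - 1)
  have hdeg0 : ¬ (a.1 = 0 ∧ b.1 + 1 = n) := by
    rintro ⟨ha0, hbn1⟩
    have hnba : nxt b = a := by
      rcases nxt_cases b with ⟨_, hv2⟩ | ⟨hv, _⟩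
      · omega
      · exact Fin.ext (by omega)
    rw [hnba] at hcr
    obtain ⟨p, hp1, hp2⟩ := hcr
    have hc := collinear_of_cross_shared (hxne b a (by omega)) ⟨p, hp2, hp1⟩
    have hna : (nxt a).1 = a.1 + 1 := by
      rcases nxt_cases a with ⟨hv, _⟩ | ⟨_, hv2⟩
      · exact hv
      · omega
    exact hcol (x b) ⟨b, rfl⟩ (x a) ⟨a, rfl⟩ (x (nxt a)) ⟨nxt a, rfl⟩
      (hxne b a (by omega)) (hxne b (nxt a) (by omega)) (hxne a (nxt a) (by omega)) hc
  -- define i and j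
  have han1 : a.1 + 1 < n := by omega
  have h1 : 1 ≤ (⟨a.1 + 1, han1⟩ : Fin n).1 := by exact Nat.le_add_left 1 a.1
  have hij : (⟨a.1 + 1, han1⟩ : Fin n).1 < b.1 := by
    show a.1 + 1 < b.1
    omega
  have hdeg : ¬ ((⟨a.1 + 1, han1⟩ : Fin n).1 = 1 ∧ b.1 + 1 = n) := by
    rintro ⟨hx1, hx2⟩
    have : a.1 = 0 := by
      have : a.1 + 1 = 1 := hx1
      omega
    exact hdeg0 ⟨this, hx2⟩
  have hprv : prv (⟨a.1 + 1, han1⟩ : Fin n) = a := by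
    apply Fin.ext
    rw [prv_val h1]
    show a.1 + 1 - 1 = a.1
    omega
  have hnxa : nxt a = (⟨a.1 + 1, han1⟩ : Fin n) := by
    rcases nxt_cases a with ⟨hv, _⟩ | ⟨_, hv2⟩
    · exact Fin.ext (by rw [hv])
    · omega
  have hina : (nxt a).1 = a.1 + 1 := by rw [hnxa]
  refine ⟨⟨a.1 + 1, han1⟩, b, Fin.lt_def.mpr hij, ?_, ?_, ?_, ?_⟩
  · rw [hprv, ← hnxa]
    exact hcr
  · exact tourEdges_diff1 hinj h1 hij hdeg
  · exact tourEdges_diff2 hinj h1 hij hdeg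
  · rw [hprv, ← hnxa]
    intro hcontra
    have hc := collinear_of_cross (hxne a (nxt a) (by omega)) hcr hcontra
    exact hcol (x a) ⟨a, rfl⟩ (x (nxt a)) ⟨nxt a, rfl⟩ (x b) ⟨b, rfl⟩
      (hxne a (nxt a) (by omega)) (hxne a b (by omega)) (hxne (nxt a) b (by omega)) hc

/-- if the tour `C(x)` contains two intersecting edges, then there
are indices `i < j` such that the edges `{x_{i-1}, x_i}` and `{x_j, x_{j+1}}`
intersect, the inversion `y = inv_{i,j}[x]` removes exactly these two edges and
introduces exactly the edges `{x_{i-1}, x_j}` and `{x_i, x_{j+1}}`, and the two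
newly introduced edges do not intersect each other. -/
theorem stmt2 (n : ℕ) (x : Fin n → Plane) (hinj : Function.Injective x)
    (hcol : noThreeCollinear (Set.range x))
    (hcross : ∃ a b : Fin n,
      s(x a, x (nxt a)) ≠ s(x b, x (nxt b)) ∧
      segsCross (x a) (x (nxt a)) (x b) (x (nxt b))) :
    ∃ i j : Fin n, i < j ∧
      segsCross (x (prv i)) (x i) (x j) (x (nxt j)) ∧
      tourEdges x \ tourEdges (invop i j x)
        = {s(x (prv i), x i), s(x j, x (nxt j))} ∧
      tourEdges (invop i j x) \ tourEdges x
        = {s(x (prv i), x j), s(x i, x (nxt j))} ∧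
      ¬ segsCross (x (prv i)) (x j) (x i) (x (nxt j)) := by
  obtain ⟨a, b, hne, hcr⟩ := hcross
  rcases lt_trichotomy a.1 b.1 with hab | hab | hab
  · exact stmt2_main x hinj hcol a b hab hne hcr
  · exact absurd (congrArg (fun t => s(x t, x (nxt t))) (Fin.ext hab)) hne
  · obtain ⟨p, hp1, hp2⟩ := hcr
    exact stmt2_main x hinj hcol b a hab (Ne.symm hne) ⟨p, hp2, hp1⟩
end
end

section
/- Let n ≥ 3 and let x, y be permutations of [n] such that y can be obtained from x by applying some sequence of j ≥ 1 jump operations. Then the probability that mixed-mutation applied to x outputs exactly y is at least (1/(2e·(j−1)!))·(n−1)^{−2j}. In particular, if y can be reached from x by k jumps (k ≥ 1), this probability is at least 1/(2e·n^{2k}·(k−1)!). -/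
noncomputable section
open Real EuclideanGeometry MeasureTheory
open scoped Classical ENNReal

/-- The pairs `(i,j)` with `i < j`, indexing the `n(n-1)/2` distinct inversions. -/
def inversionPairsF (n : ℕ) : Finset (Fin n × Fin n) :=
  Finset.univ.filter (fun q => q.1 < q.2)

/-- The index pairs for the `(n-1)²` distinct jump operations (pairs `(i,j)` with
`i ≠ j`, where `jmp (j+1) j` is identified with `jmp j (j+1)`). -/
def jumpPairsF (n : ℕ) : Finset (Fin n × Fin n) :=
  Finset.univ.filter (fun q => q.1 ≠ q.2 ∧ q.1.1 ≠ q.2.1 + 1)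

/-- Probability (as a real number) that `m` independent uniformly random inversions
transform `x` into `y`. -/
def invWalkR {α : Type*} (n : ℕ) : ℕ → (Fin n → α) → (Fin n → α) → ℝ
  | 0, x, y => if x = y then 1 else 0
  | m + 1, x, y =>
      ((inversionPairsF n).card : ℝ)⁻¹ *
        ∑ q ∈ inversionPairsF n, invWalkR n m (invop q.1 q.2 x) y

/-- Probability that `m` independent uniformly random jumps transform `x` into `y`. -/
def jumpWalkR {α : Type*} (n : ℕ) : ℕ → (Fin n → α) → (Fin n → α) → ℝ
  | 0, x, y => if x = y then 1 else 0
  | m + 1, x, y =>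
      ((jumpPairsF n).card : ℝ)⁻¹ *
        ∑ q ∈ jumpPairsF n, jumpWalkR n m (jmp q.1 q.2 x) y

/-- Probability that `2-opt-mutation(x)` outputs `y`: draw `s` from a Poisson
distribution with parameter 1, then apply `s+1` uniformly random inversions. -/
def twoOptProbR {α : Type*} (n : ℕ) (x y : Fin n → α) : ℝ :=
  ∑' s : ℕ, (Real.exp (-1) / s.factorial) * invWalkR n (s + 1) x y

/-- Probability that `mixed-mutation(x)` outputs `y`: with probability 1/2 apply
`s+1` random inversions, with probability 1/2 apply `s+1` random jumps, where `s`
is Poisson with parameter 1. -/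
def mixedProbR {α : Type*} (n : ℕ) (x y : Fin n → α) : ℝ :=
  ∑' s : ℕ, (Real.exp (-1) / s.factorial) *
    ((1 / 2) * invWalkR n (s + 1) x y + (1 / 2) * jumpWalkR n (s + 1) x y)

/-- First hitting time (counted so that the initial state is at time 1) of the
set of states satisfying `opt`, with value `∞` if the set is never hit. -/
def hitTime {Ω S : Type*} (opt : S → Prop) (X : ℕ → Ω → S) (ω : Ω) : ℝ≥0∞ :=
  sInf {m : ℝ≥0∞ | ∃ t : ℕ, m = (t : ℝ≥0∞) + 1 ∧ opt (X t ω)}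

lemma invWalkR_nonneg {α : Type*} (n m : ℕ) (x y : Fin n → α) : 0 ≤ invWalkR n m x y := by
  induction m generalizing x with
  | zero => simp [invWalkR]; split <;> norm_num
  | succ m ih =>
    simp only [invWalkR]
    exact mul_nonneg (by positivity) (Finset.sum_nonneg fun q _ => ih _)

lemma jumpWalkR_nonneg {α : Type*} (n m : ℕ) (x y : Fin n → α) : 0 ≤ jumpWalkR n m x y := by
  induction m generalizing x with
  | zero => simp [jumpWalkR]; split <;> norm_num
  | succ m ih =>
    simp only [jumpWalkR]
    exact mul_nonneg (by positivity) (Finset.sum_nonneg fun q _ => ih _)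

lemma invWalkR_le_one {α : Type*} (n m : ℕ) (x y : Fin n → α) : invWalkR n m x y ≤ 1 := by
  induction m generalizing x with
  | zero => simp [invWalkR]; split <;> norm_num
  | succ m ih =>
    simp only [invWalkR]
    rcases eq_or_ne ((inversionPairsF n).card) 0 with h | h
    · rw [Finset.card_eq_zero] at h; simp [h]
    · calc ((inversionPairsF n).card : ℝ)⁻¹ * ∑ q ∈ inversionPairsF n, invWalkR n m (invop q.1 q.2 x) y
          ≤ ((inversionPairsF n).card : ℝ)⁻¹ * ∑ _q ∈ inversionPairsF n, (1 : ℝ) := by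
            gcongr with q hq
            exact ih _
        _ = 1 := by
            rw [Finset.sum_const, nsmul_eq_mul, mul_one, inv_mul_cancel₀]
            exact_mod_cast h

lemma jumpWalkR_le_one {α : Type*} (n m : ℕ) (x y : Fin n → α) : jumpWalkR n m x y ≤ 1 := by
  induction m generalizing x with
  | zero => simp [jumpWalkR]; split <;> norm_num
  | succ m ih =>
    simp only [jumpWalkR]
    rcases eq_or_ne ((jumpPairsF n).card) 0 with h | h
    · rw [Finset.card_eq_zero] at h; simp [h]
    · calc ((jumpPairsF n).card : ℝ)⁻¹ * ∑ q ∈ jumpPairsF n, jumpWalkR n m (jmp q.1 q.2 x) y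
          ≤ ((jumpPairsF n).card : ℝ)⁻¹ * ∑ _q ∈ jumpPairsF n, (1 : ℝ) := by
            gcongr with q hq
            exact ih _
        _ = 1 := by
            rw [Finset.sum_const, nsmul_eq_mul, mul_one, inv_mul_cancel₀]
            exact_mod_cast h

lemma card_jumpPairsF (n : ℕ) (hn : 1 ≤ n) : (jumpPairsF n).card = (n - 1) ^ 2 := by
  classical
  have hAB : jumpPairsF n =
      (Finset.univ : Finset (Fin n × Fin n)).filter (fun q => q.1 ≠ q.2) \
      (Finset.univ : Finset (Fin n × Fin n)).filter (fun q => q.1.1 = q.2.1 + 1) := by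
    ext q
    simp only [jumpPairsF, Finset.mem_filter, Finset.mem_sdiff, Finset.mem_univ, true_and]
  have hsub : (Finset.univ : Finset (Fin n × Fin n)).filter (fun q => q.1.1 = q.2.1 + 1) ⊆
      (Finset.univ : Finset (Fin n × Fin n)).filter (fun q => q.1 ≠ q.2) := by
    intro q hq
    simp only [Finset.mem_filter, Finset.mem_univ, true_and] at hq ⊢
    intro he
    rw [he] at hq
    omega
  have hA : ((Finset.univ : Finset (Fin n × Fin n)).filter (fun q => q.1 ≠ q.2)).card
      = n * n - n := by
    have : (Finset.univ : Finset (Fin n × Fin n)).filter (fun q => q.1 ≠ q.2)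
        = (Finset.univ : Finset (Fin n)).offDiag := by
      ext q
      simp [Finset.mem_offDiag]
    rw [this, Finset.offDiag_card]
    simp
  have hB : ((Finset.univ : Finset (Fin n × Fin n)).filter (fun q => q.1.1 = q.2.1 + 1)).card
      = n - 1 := by
    have himg : (Finset.univ : Finset (Fin n × Fin n)).filter (fun q => q.1.1 = q.2.1 + 1)
        = Finset.image (fun m : Fin (n - 1) =>
            ((⟨m.1 + 1, by omega⟩ : Fin n), (⟨m.1, by omega⟩ : Fin n))) Finset.univ := by
      ext q
      simp only [Finset.mem_filter, Finset.mem_univ, true_and, Finset.mem_image]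
      constructor
      · intro h
        refine ⟨⟨q.2.1, by have := q.1.2; omega⟩, ?_⟩
        ext <;> simp [← h]
      · rintro ⟨m, rfl⟩
        rfl
    rw [himg, Finset.card_image_of_injective _ (fun a b hab => by
      simp only [Prod.mk.injEq, Fin.mk.injEq] at hab
      exact Fin.ext hab.2), Finset.card_univ, Fintype.card_fin]
  rw [hAB, Finset.card_sdiff_of_subset hsub, hA, hB]
  obtain ⟨m, rfl⟩ : ∃ m, n = m + 1 := ⟨n - 1, by omega⟩
  simp only [Nat.add_sub_cancel]
  have h1 : (m + 1) * (m + 1) = m ^ 2 + (m + 1) + m := by ring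
  rw [h1]
  generalize m ^ 2 = M
  omega

lemma jmp_swap {α : Type*} {n : ℕ} (i j : Fin n) (h : i.1 = j.1 + 1) (x : Fin n → α) :
    jmp i j x = jmp j i x := by
  funext p
  simp only [jmp, Fin.le_def, Fin.lt_def, Fin.ext_iff]
  split_ifs <;>
    first
      | rfl
      | omega
      | (exfalso; omega)
      | (congr 1; apply Fin.ext; simp; omega)

lemma jumpWalk_ge {n : ℕ} (hn : 3 ≤ n) (l : List (Fin n × Fin n))
    (hl : ∀ q ∈ l, q.1 ≠ q.2) (x : Fin n → Fin n) :
    (((n : ℝ) - 1) ^ (2 * l.length))⁻¹ ≤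
      jumpWalkR n l.length x (l.foldl (fun z q => jmp q.1 q.2 z) x) := by
  have hn1 : (0:ℝ) < (n : ℝ) - 1 := by
    have : (3:ℝ) ≤ (n:ℝ) := by exact_mod_cast hn
    linarith
  induction l generalizing x with
  | nil => simp [jumpWalkR]
  | cons q l ih =>
    obtain ⟨q', hq'mem, hq'⟩ : ∃ q' ∈ jumpPairsF n, jmp q'.1 q'.2 x = jmp q.1 q.2 x := by
      by_cases hc : q.1.1 = q.2.1 + 1
      · refine ⟨(q.2, q.1), ?_, (jmp_swap q.1 q.2 hc x).symm⟩
        simp only [jumpPairsF, Finset.mem_filter, Finset.mem_univ, true_and]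
        refine ⟨(hl q List.mem_cons_self).symm, by omega⟩
      · refine ⟨q, ?_, rfl⟩
        simp only [jumpPairsF, Finset.mem_filter, Finset.mem_univ, true_and]
        exact ⟨hl q List.mem_cons_self, hc⟩
    have hcard : ((jumpPairsF n).card : ℝ) = ((n:ℝ) - 1) ^ 2 := by
      rw [card_jumpPairsF n (by omega)]
      push_cast [Nat.cast_sub (by omega : 1 ≤ n)]
      ring
    set Y := (q :: l).foldl (fun z q => jmp q.1 q.2 z) x with hY
    have hYl : Y = l.foldl (fun z q => jmp q.1 q.2 z) (jmp q.1 q.2 x) := by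
      simp [hY]
    have hsingle : jumpWalkR n l.length (jmp q'.1 q'.2 x) Y ≤
        ∑ r ∈ jumpPairsF n, jumpWalkR n l.length (jmp r.1 r.2 x) Y :=
      Finset.single_le_sum (f := fun r => jumpWalkR n l.length (jmp r.1 r.2 x) Y)
        (fun r _ => jumpWalkR_nonneg n l.length _ _) hq'mem
    have hih : (((n : ℝ) - 1) ^ (2 * l.length))⁻¹ ≤
        jumpWalkR n l.length (jmp q'.1 q'.2 x) Y := by
      rw [hq', hYl]
      exact ih (fun r hr => hl r (List.mem_cons_of_mem q hr)) (jmp q.1 q.2 x)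
    have hlen : (q :: l).length = l.length + 1 := rfl
    rw [hlen]
    show (((n : ℝ) - 1) ^ (2 * (l.length + 1)))⁻¹ ≤ jumpWalkR n (l.length + 1) x Y
    have hexp : jumpWalkR n (l.length + 1) x Y =
        ((jumpPairsF n).card : ℝ)⁻¹ * ∑ r ∈ jumpPairsF n, jumpWalkR n l.length (jmp r.1 r.2 x) Y := rfl
    rw [hexp, hcard]
    have h2 : (((n : ℝ) - 1) ^ (2 * (l.length + 1)))⁻¹ =
        (((n:ℝ) - 1) ^ 2)⁻¹ * (((n : ℝ) - 1) ^ (2 * l.length))⁻¹ := by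
      rw [← mul_inv, ← pow_add]
      ring_nf
    rw [h2]
    have : (((n : ℝ) - 1) ^ (2 * l.length))⁻¹ ≤
        ∑ r ∈ jumpPairsF n, jumpWalkR n l.length (jmp r.1 r.2 x) Y :=
      le_trans hih hsingle
    exact mul_le_mul_of_nonneg_left this (by positivity)

/-- if `y` is reachable from `x` by `j ≥ 1` jump operations, then
`mixed-mutation(x)` outputs `y` with probability at least
`(1/(2e·(j-1)!))·(n-1)^{-2j}`; in particular at least `1/(2e·n^{2k}·(k-1)!)`
if `y` is reachable by `k` jumps. -/
theorem stmt16 (n : ℕ) (hn : 3 ≤ n) (x y : Fin n → Fin n)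
    (hx : Function.Bijective x) (j : ℕ) (hj : 1 ≤ j)
    (hreach : ∃ l : List (Fin n × Fin n), l.length = j ∧ (∀ q ∈ l, q.1 ≠ q.2) ∧
      l.foldl (fun z q => jmp q.1 q.2 z) x = y) :
    (1 / (2 * Real.exp 1 * (j - 1).factorial)) * (((n : ℝ) - 1) ^ (2 * j))⁻¹
        ≤ mixedProbR n x y ∧
    (∀ k : ℕ, 1 ≤ k → j = k →
      1 / (2 * Real.exp 1 * (n : ℝ) ^ (2 * k) * (k - 1).factorial)
        ≤ mixedProbR n x y) := by
  obtain ⟨l, hlen, hne, hfold⟩ := hreach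
  have hn1 : (0:ℝ) < (n : ℝ) - 1 := by
    have : (3:ℝ) ≤ (n:ℝ) := by exact_mod_cast hn
    linarith
  -- the summand of mixedProbR
  set f : ℕ → ℝ := fun s => (Real.exp (-1) / s.factorial) *
    ((1 / 2) * invWalkR n (s + 1) x y + (1 / 2) * jumpWalkR n (s + 1) x y) with hf
  have hfnonneg : ∀ s, 0 ≤ f s := by
    intro s
    apply mul_nonneg (by positivity)
    have h1 := invWalkR_nonneg n (s+1) x y
    have h2 := jumpWalkR_nonneg n (s+1) x y
    linarith
  have hfle : ∀ s, f s ≤ Real.exp (-1) / s.factorial := by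
    intro s
    have h1 := invWalkR_le_one n (s+1) x y
    have h2 := jumpWalkR_le_one n (s+1) x y
    have hc : (0:ℝ) ≤ Real.exp (-1) / s.factorial := by positivity
    calc f s ≤ (Real.exp (-1) / s.factorial) * ((1/2) * 1 + (1/2) * 1) := by
          apply mul_le_mul_of_nonneg_left _ hc
          have h1' := invWalkR_nonneg n (s+1) x y
          have h2' := jumpWalkR_nonneg n (s+1) x y
          linarith
      _ = Real.exp (-1) / s.factorial := by ring
  have hsummable : Summable f := by
    apply Summable.of_nonneg_of_le hfnonneg hfle
    have := (Real.summable_pow_div_factorial 1).mul_left (Real.exp (-1))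
    refine this.congr (fun s => ?_)
    simp [div_eq_mul_inv]
  have hterm : f (j - 1) ≤ mixedProbR n x y := by
    have : mixedProbR n x y = ∑' s, f s := rfl
    rw [this]
    exact Summable.le_tsum hsummable (j - 1) (fun i _ => hfnonneg i)
  have hj1 : j - 1 + 1 = j := by omega
  have hjump : (((n : ℝ) - 1) ^ (2 * j))⁻¹ ≤ jumpWalkR n j x y := by
    have := jumpWalk_ge hn l hne x
    rw [hlen, hfold] at this
    exact this
  have hmain : (1 / (2 * Real.exp 1 * (j - 1).factorial)) * (((n : ℝ) - 1) ^ (2 * j))⁻¹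
      ≤ mixedProbR n x y := by
    refine le_trans ?_ hterm
    have hfj : f (j - 1) = (Real.exp (-1) / (j-1).factorial) *
        ((1 / 2) * invWalkR n j x y + (1 / 2) * jumpWalkR n j x y) := by
      rw [hf]; simp only [hj1]
    rw [hfj]
    have hinv := invWalkR_nonneg n j x y
    have hc : (0:ℝ) ≤ Real.exp (-1) / (j-1).factorial := by positivity
    calc (1 / (2 * Real.exp 1 * (j - 1).factorial)) * (((n : ℝ) - 1) ^ (2 * j))⁻¹
        = (Real.exp (-1) / (j-1).factorial) * ((1/2) * (((n : ℝ) - 1) ^ (2 * j))⁻¹) := by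
          rw [Real.exp_neg]
          field_simp
      _ ≤ (Real.exp (-1) / (j-1).factorial) * ((1/2) * jumpWalkR n j x y) := by
          apply mul_le_mul_of_nonneg_left _ hc
          apply mul_le_mul_of_nonneg_left hjump (by norm_num)
      _ ≤ (Real.exp (-1) / (j-1).factorial) *
          ((1 / 2) * invWalkR n j x y + (1 / 2) * jumpWalkR n j x y) := by
          apply mul_le_mul_of_nonneg_left _ hc
          linarith
  refine ⟨hmain, ?_⟩
  intro k hk hjk
  subst hjk
  refine le_trans ?_ hmain
  have hpow : ((n : ℝ) - 1) ^ (2 * j) ≤ (n : ℝ) ^ (2 * j) := by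
    apply pow_le_pow_left₀ (le_of_lt hn1)
    linarith
  have hfac : (0:ℝ) < (j - 1).factorial := by positivity
  have he : (0:ℝ) < Real.exp 1 := Real.exp_pos 1
  rw [one_div, one_div, ← mul_inv]
  apply inv_anti₀
  · positivity
  · have := mul_le_mul_of_nonneg_left hpow
      (show (0:ℝ) ≤ 2 * Real.exp 1 * ((j - 1).factorial : ℝ) by positivity)
    nlinarith [this]
end
end
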